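/- Let m, n, t, x be positive integers with gcd(m, n) = 1, m = ∏_{i=1}^{s} p_i^{k_i}, and suppose (σ_x(mn) + σ_x(m)·t)/(mn)^x is in lowest terms with I(x, p_i·m) > (σ_x(mn) + σ_x(m)·t)/(mn)^x for all 1 ≤ i ≤ s. If (σ_x(mn) + σ_x(m)·t)/(mn)^x = I(x, a) for some positive integer a, then (σ_x(n) + t)/n^x = I(x, b) for some positive integer b. -/

import Mathlib

open Finset Nat

/-- Sum of x-th powers of divisors. -/
def sigmaX (x n : ℕ) : ℕ := ∑ d ∈ n.divisors, d ^ x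

/-- The x-th abundancy index as a rational number. -/
def Iq (x n : ℕ) : ℚ := (sigmaX x n : ℚ) / (n : ℚ) ^ x

lemma sigmaX_eq_sigma (x n : ℕ) : sigmaX x n = ArithmeticFunction.sigma x n := by
  simp [sigmaX, ArithmeticFunction.sigma_apply]

lemma sigmaX_mult (x : ℕ) {m n : ℕ} (h : Nat.Coprime m n) :
    sigmaX x (m * n) = sigmaX x m * sigmaX x n := by
  rw [sigmaX_eq_sigma, sigmaX_eq_sigma, sigmaX_eq_sigma]
  exact ArithmeticFunction.isMultiplicative_sigma.map_mul_of_coprime h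

lemma sigmaX_pos (x : ℕ) {n : ℕ} (hn : 0 < n) : 0 < sigmaX x n := by
  unfold sigmaX
  apply Finset.sum_pos
  · intro d hd
    exact pow_pos (Nat.pos_of_mem_divisors hd) x
  · exact Nat.nonempty_divisors.mpr hn.ne'

lemma Iq_pos (x : ℕ) {n : ℕ} (hn : 0 < n) : 0 < Iq x n := by
  unfold Iq
  apply _root_.div_pos
  · exact_mod_cast sigmaX_pos x hn
  · positivity

lemma Iq_eq_sum (x : ℕ) {n : ℕ} (hn : 0 < n) :
    Iq x n = ∑ d ∈ n.divisors, (1 : ℚ) / (d : ℚ) ^ x := by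
  have h1 : Iq x n = ∑ d ∈ n.divisors, (fun d : ℕ => (1 : ℚ) / (d : ℚ) ^ x) (n / d) := by
    unfold Iq sigmaX
    push_cast
    rw [Finset.sum_div]
    refine Finset.sum_congr rfl fun d hd => ?_
    obtain ⟨hd1, _⟩ := Nat.mem_divisors.mp hd
    have hd0 : 0 < d := Nat.pos_of_mem_divisors hd
    have hnd : d * (n / d) = n := Nat.mul_div_cancel' hd1
    have hq : (d : ℚ) * ((n / d : ℕ) : ℚ) = (n : ℚ) := by exact_mod_cast congrArg (Nat.cast : ℕ → ℚ) hnd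
    have hnd0 : 0 < n / d := Nat.div_pos (Nat.le_of_dvd hn hd1) hd0
    rw [← hq]
    field_simp
    ring
  rw [h1]
  exact Nat.sum_div_divisors n (fun d : ℕ => (1 : ℚ) / (d : ℚ) ^ x)

lemma Iq_mono (x : ℕ) {d a : ℕ} (hd : d ∣ a) (ha : 0 < a) : Iq x d ≤ Iq x a := by
  have hd0 : 0 < d := Nat.pos_of_dvd_of_pos hd ha
  rw [Iq_eq_sum x hd0, Iq_eq_sum x ha]
  apply Finset.sum_le_sum_of_subset_of_nonneg (Nat.divisors_subset_of_dvd ha.ne' hd)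
  intro i hi _
  positivity

lemma Iq_mul (x : ℕ) {m n : ℕ} (h : Nat.Coprime m n) :
    Iq x (m * n) = Iq x m * Iq x n := by
  unfold Iq
  rw [sigmaX_mult x h]
  push_cast
  rw [mul_pow]
  ring

theorem stmt_16 (x m n t s : ℕ) (hx : 0 < x) (hm : 0 < m) (hn : 0 < n) (ht : 0 < t)
    (hs : 0 < s) (hcopmn : Nat.gcd m n = 1)
    (p : Fin s → ℕ) (k : Fin s → ℕ)
    (hp : ∀ i, (p i).Prime) (hinj : Function.Injective p) (hk : ∀ i, 0 < k i)
    (hfac : m = ∏ i, p i ^ k i)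
    (hlow : Nat.gcd (sigmaX x (m * n) + sigmaX x m * t) ((m * n) ^ x) = 1)
    (hgtI : ∀ i, Iq x (p i * m) >
      ((sigmaX x (m * n) + sigmaX x m * t : ℕ) : ℚ) / ((m * n : ℕ) : ℚ) ^ x)
    (a : ℕ) (ha : 0 < a)
    (hIa : Iq x a = ((sigmaX x (m * n) + sigmaX x m * t : ℕ) : ℚ) / ((m * n : ℕ) : ℚ) ^ x) :
    ∃ b : ℕ, 0 < b ∧ Iq x b = ((sigmaX x n + t : ℕ) : ℚ) / (n : ℚ) ^ x := by
  set N : ℕ := sigmaX x (m * n) + sigmaX x m * t with hN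
  set D : ℕ := (m * n) ^ x with hD
  have hmn0 : 0 < m * n := Nat.mul_pos hm hn
  have hD0 : 0 < D := pow_pos hmn0 x
  -- cross multiply
  have hcross : sigmaX x a * D = N * a ^ x := by
    have h1 : (sigmaX x a : ℚ) / (a : ℚ) ^ x = (N : ℚ) / (D : ℚ) := by
      have := hIa; unfold Iq at this; rw [this, hD]; push_cast; ring
    have h2 : (sigmaX x a : ℚ) * (D : ℚ) = (N : ℚ) * (a : ℚ) ^ x := by
      rw [div_eq_div_iff (by positivity) (by exact_mod_cast hD0.ne')] at h1
      exact h1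
    exact_mod_cast h2
  have hdvd : D ∣ a ^ x := by
    have : D ∣ N * a ^ x := hcross ▸ Dvd.intro_left _ rfl
    exact (Nat.Coprime.dvd_of_dvd_mul_left (Nat.coprime_comm.mp hlow) this)
  have hmna : m * n ∣ a := (Nat.pow_dvd_pow_iff hx.ne').mp hdvd
  have hma : m ∣ a := dvd_trans (dvd_mul_right m n) hmna
  set b : ℕ := a / m with hb
  have hab : a = m * b := (Nat.mul_div_cancel' hma).symm
  have hb0 : 0 < b := by
    rcases Nat.eq_zero_or_pos b with h | h
    · rw [h, mul_zero] at hab; omega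
    · exact h
  -- coprimality of m and b
  have hcop : Nat.Coprime m b := by
    by_contra hnc
    obtain ⟨q, hq, hqm, hqb⟩ := Nat.Prime.not_coprime_iff_dvd.mp hnc
    -- q is one of the p i
    have : ∃ i, q = p i := by
      rw [hfac] at hqm
      obtain ⟨i, _, hdvd⟩ := hq.prime.exists_mem_finset_dvd hqm
      exact ⟨i, (Nat.prime_dvd_prime_iff_eq hq (hp i)).mp (hq.dvd_of_dvd_pow hdvd)⟩
    obtain ⟨i, rfl⟩ := this
    have hdvd_pa : p i * m ∣ a := by
      rw [hab, mul_comm (p i) m]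
      exact mul_dvd_mul_left m hqb
    have hle : Iq x (p i * m) ≤ Iq x a := Iq_mono x hdvd_pa ha
    have := hgtI i
    rw [← hIa] at this
    exact absurd hle (not_le.mpr this)
  -- multiplicativity
  refine ⟨b, hb0, ?_⟩
  have hIab : Iq x a = Iq x m * Iq x b := by rw [hab, Iq_mul x hcop]
  have hsplit : ((N : ℚ)) / ((m * n : ℕ) : ℚ) ^ x
      = Iq x m * (((sigmaX x n + t : ℕ) : ℚ) / (n : ℚ) ^ x) := by
    have hmul : sigmaX x (m * n) = sigmaX x m * sigmaX x n := sigmaX_mult x hcopmn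
    unfold Iq
    rw [hN, hmul]
    have hm0 : ((m : ℚ)) ^ x ≠ 0 := by positivity
    have hn0 : ((n : ℚ)) ^ x ≠ 0 := by positivity
    push_cast
    field_simp
    ring
  have hIqm : Iq x m ≠ 0 := (Iq_pos x hm).ne'
  have : Iq x m * Iq x b = Iq x m * (((sigmaX x n + t : ℕ) : ℚ) / (n : ℚ) ^ x) := by
    rw [← hIab, hIa, hsplit]
  exact mul_left_cancel₀ hIqm this
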